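/- arXiv:2102.08018 — 6 statements merged into one kernel-verified Lean document; each statement's English description precedes it below -/
import Mathlib

section
/- Let F be a field and consider the power series ring F⟦t⟧. Let x₁(t), …, x_g(t) ∈ F⟦t⟧ and let y₁(t), …, y_g(t) ∈ F⟦t⟧ be invertible power series. Let H be the g×g matrix over F⟦t⟧ with entry H_{i,j} = x_j(t)^{i−1}/y_j(t), let W(z) = ∑_{k=0}^{g−1} w_k(t) z^k be a polynomial over F⟦t⟧ with W(x_j(t)) = 1/y_j(t) for all j, and for m ≥ 1 set r_m = ∑_{j=1}^g x_j(t)^{m−1}·x_j'(t), where x_j' denotes the formal derivative. Then for every i with 1 ≤ i ≤ g, the i-th entry of H·X', where X' = (x₁', …, x_g'), equals ∑_{k=0}^{g−1} r_{i+k} w_k; equivalently, H·X' equals the product of the g×g Hankel matrix whose (i,k) entry is r_{i+k−1} with the vector (w₀, …, w_{g−1}). -/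
/-- Over the power series ring `F⟦t⟧` of a field `F`, let `x₁(t), …, x_g(t)` be
power series and `y₁(t), …, y_g(t)` invertible power series. Let `H` be the `g×g` matrix with
entries `H_{i,j} = x_j^{i−1}/y_j`, let `W(z) = ∑ w_k(t) z^k` satisfy `W(x_j) = 1/y_j` for all
`j`, and set `r_m = ∑_j x_j^{m−1}·x_j'` (formal derivative). Then the `i`-th entry of `H·X'`,
where `X' = (x₁', …, x_g')`, equals `∑_{k=0}^{g−1} r_{i+k} w_k`; equivalently `H·X'` equals the
product of the Hankel matrix with entries `r_{i+k−1}` with the vector `(w₀, …, w_{g−1})`.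
(Indices are 0-based, so `H i j = x j ^ i * (y j)⁻¹` and the Hankel matrix has entries
`r (i + k + 1)`.) -/
theorem H_mulVec_X'_eq_hankel_mulVec_w
    (F : Type*) [Field F] (g : ℕ)
    (x : Fin g → PowerSeries F) (y : Fin g → (PowerSeries F)ˣ)
    (H : Matrix (Fin g) (Fin g) (PowerSeries F))
    (hH : H = Matrix.of fun i j : Fin g => x j ^ (i : ℕ) * (↑(y j)⁻¹ : PowerSeries F))
    (w : Fin g → PowerSeries F)
    (hW : ∀ j, ∑ k : Fin g, w k * x j ^ (k : ℕ) = (↑(y j)⁻¹ : PowerSeries F))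
    (r : ℕ → PowerSeries F)
    (hr : ∀ m, 1 ≤ m →
      r m = ∑ j : Fin g, x j ^ (m - 1) * PowerSeries.derivativeFun (x j)) :
    (∀ i : Fin g,
        H.mulVec (fun j => PowerSeries.derivativeFun (x j)) i =
          ∑ k : Fin g, r ((i : ℕ) + (k : ℕ) + 1) * w k) ∧
      H.mulVec (fun j => PowerSeries.derivativeFun (x j)) =
        (Matrix.of fun i k : Fin g => r ((i : ℕ) + (k : ℕ) + 1)).mulVec w := by
  have key : ∀ i : Fin g,
      H.mulVec (fun j => PowerSeries.derivativeFun (x j)) i =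
        ∑ k : Fin g, r ((i : ℕ) + (k : ℕ) + 1) * w k := by
    intro i
    subst hH
    simp only [Matrix.mulVec, dotProduct, Matrix.of_apply]
    calc ∑ j : Fin g, x j ^ (i : ℕ) * (↑(y j)⁻¹ : PowerSeries F) *
            PowerSeries.derivativeFun (x j)
        = ∑ j : Fin g, ∑ k : Fin g, w k *
            (x j ^ ((i : ℕ) + (k : ℕ)) * PowerSeries.derivativeFun (x j)) := by
          refine Finset.sum_congr rfl fun j _ => ?_
          rw [← hW j, Finset.mul_sum, Finset.sum_mul]
          refine Finset.sum_congr rfl fun k _ => ?_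
          rw [pow_add]
          ring
      _ = ∑ k : Fin g, ∑ j : Fin g, w k *
            (x j ^ ((i : ℕ) + (k : ℕ)) * PowerSeries.derivativeFun (x j)) :=
          Finset.sum_comm
      _ = ∑ k : Fin g, r ((i : ℕ) + (k : ℕ) + 1) * w k := by
          refine Finset.sum_congr rfl fun k _ => ?_
          rw [hr _ (Nat.le_add_left 1 _)]
          simp [Finset.mul_sum, mul_comm]
  refine ⟨key, funext fun i => ?_⟩
  rw [key i]
  simp [Matrix.mulVec, dotProduct]
end

section
/- Let R be a commutative ring, let x₁, …, x_g and v₁, …, v_g be elements of R, and let U(z) = ∏_{j=1}^g (z − x_j). For i = 1, …, g set F_i = ∑_{j=1}^g x_j^{i−1} v_j, and let D(z) = ∑_{i=1}^g F_i z^{g+1−i}. Write U(z)·D(z) = ∑_{k=0}^{2g} q_k z^k and define Q(z) = ∑_{k=0}^{g−1} q_{g+1+k} z^k. Then Q(z) = ∑_{j=1}^g v_j · ∏_{i≠j} (z − x_i). -/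
open Polynomial

/-- Let `R` be a commutative ring, `x₁, …, x_g, v₁, …, v_g ∈ R`, and
`U(z) = ∏ (z − x_j)`. For `i = 1, …, g` set `F_i = ∑_j x_j^{i−1} v_j` and let
`D(z) = ∑_{i=1}^g F_i z^{g+1−i}`. Writing `U·D = ∑_{k=0}^{2g} q_k z^k` and
`Q(z) = ∑_{k=0}^{g−1} q_{g+1+k} z^k`, we have `Q(z) = ∑_j v_j ∏_{i≠j} (z − x_i)`.
(Indices are 0-based here: `F i = ∑_j x_j^i v_j` for `i : Fin g` and the corresponding
monomial in `D` is `z^(g−i)`.) -/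
theorem high_coeffs_of_U_mul_D
    (R : Type*) [CommRing R] (g : ℕ)
    (x v : Fin g → R)
    (U : R[X]) (hU : U = ∏ j : Fin g, (X - C (x j)))
    (Fc : Fin g → R) (hFc : ∀ i : Fin g, Fc i = ∑ j : Fin g, x j ^ (i : ℕ) * v j)
    (D : R[X]) (hD : D = ∑ i : Fin g, C (Fc i) * X ^ (g - (i : ℕ)))
    (Q : R[X]) (hQ : Q = ∑ k ∈ Finset.range g, C ((U * D).coeff (g + 1 + k)) * X ^ k) :
    Q = ∑ j : Fin g, C (v j) * ∏ i ∈ Finset.univ.erase j, (X - C (x i)) := by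
  classical
  rcases Nat.eq_zero_or_pos g with hg | hg
  · subst hg; simp [hQ]
  set P : Fin g → R[X] := fun j => ∏ i ∈ Finset.univ.erase j, (X - C (x i)) with hP
  set S : R[X] := ∑ j : Fin g, C (v j) * P j with hS
  set T : R[X] := ∑ j : Fin g, C (v j * x j ^ g) * P j with hT
  set G : Fin g → R[X] := fun j => ∑ i ∈ Finset.range g, (C (x j)) ^ i * X ^ (g - 1 - i) with hG
  have hPdeg : ∀ j, (P j).natDegree ≤ g - 1 := by
    intro j
    have h1 : (P j).natDegree ≤ ∑ i ∈ Finset.univ.erase j, (X - C (x i)).natDegree :=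
      Polynomial.natDegree_prod_le _ _
    have h2 : ∑ i ∈ Finset.univ.erase j, (X - C (x i)).natDegree
        ≤ ∑ _i ∈ Finset.univ.erase j, 1 :=
      Finset.sum_le_sum fun i _ => Polynomial.natDegree_X_sub_C_le (x i)
    simpa [Finset.card_erase_of_mem] using h1.trans h2
  have hSdeg : S.natDegree ≤ g - 1 := by
    refine Polynomial.natDegree_sum_le_of_forall_le _ _ fun j _ => ?_
    exact (Polynomial.natDegree_C_mul_le _ _).trans (hPdeg j)
  have hTdeg : T.natDegree ≤ g - 1 := by
    refine Polynomial.natDegree_sum_le_of_forall_le _ _ fun j _ => ?_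
    exact (Polynomial.natDegree_C_mul_le _ _).trans (hPdeg j)
  have hUP : ∀ j : Fin g, U = (X - C (x j)) * P j := by
    intro j
    rw [hU, ← Finset.mul_prod_erase _ _ (Finset.mem_univ j)]
  have hgeom : ∀ j : Fin g, (X - C (x j)) * G j = X ^ g - C (x j) ^ g := by
    intro j
    have h := geom_sum₂_mul (C (x j)) (X : R[X]) g
    rw [hG]
    linear_combination -h
  have hD' : D = ∑ j : Fin g, C (v j) * (X * G j) := by
    rw [hD]
    simp_rw [hFc, map_sum, Finset.sum_mul]
    rw [Finset.sum_comm]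
    refine Finset.sum_congr rfl fun j _ => ?_
    rw [hG, Finset.mul_sum, Finset.mul_sum,
      Fin.sum_univ_eq_sum_range (fun i => C (x j ^ i * v j) * X ^ (g - i))]
    refine Finset.sum_congr rfl fun i hi => ?_
    have hi' : i < g := Finset.mem_range.mp hi
    have : g - i = (g - 1 - i) + 1 := by omega
    rw [this, map_mul, map_pow, pow_succ]
    ring
  have hUD : U * D = X ^ (g + 1) * S - X * T := by
    have key : ∀ j : Fin g, U * (C (v j) * (X * G j)) =
        X ^ (g + 1) * (C (v j) * P j) - X * (C (v j * x j ^ g) * P j) := by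
      intro j
      rw [hUP j, map_mul, map_pow]
      have h := hgeom j
      linear_combination (C (v j) * X * P j) * h
    rw [hD', Finset.mul_sum]
    simp_rw [key, Finset.sum_sub_distrib, ← Finset.mul_sum]
    rfl
  have hQ' : Q = ∑ k ∈ Finset.range g, C (S.coeff k) * X ^ k := by
    rw [hQ]
    refine Finset.sum_congr rfl fun k hk => ?_
    rw [hUD, coeff_sub]
    have h1 : (X ^ (g + 1) * S).coeff (g + 1 + k) = S.coeff k := by
      have : g + 1 + k = k + (g + 1) := by omega
      rw [this, Polynomial.coeff_X_pow_mul]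
    have h2 : (X * T).coeff (g + 1 + k) = 0 := by
      apply Polynomial.coeff_eq_zero_of_natDegree_lt
      have := Polynomial.natDegree_mul_le (p := (X : R[X])) (q := T)
      have hx : (X : R[X]).natDegree ≤ 1 := Polynomial.natDegree_X_le
      omega
    rw [h1, h2, sub_zero]
  rw [hQ']
  have : S = ∑ k ∈ Finset.range g, C (S.coeff k) * X ^ k := by
    conv_lhs => rw [Polynomial.as_sum_range' S g (by omega)]
    simp [Polynomial.C_mul_X_pow_eq_monomial]
  rw [← this, hS]
end

section
/- Let F be a field, let x₁, …, x_g be pairwise distinct elements of F, let v₁, …, v_g ∈ F, and let U(z) = ∏_{j=1}^g (z − x_j). For i = 1, …, g set F_i = ∑_{j=1}^g x_j^{i−1} v_j, let D(z) = ∑_{i=1}^g F_i z^{g+1−i}, write U(z)·D(z) = ∑_{k=0}^{2g} q_k z^k, and define Q(z) = ∑_{k=0}^{g−1} q_{g+1+k} z^k. Then Q(x_j) = v_j · U'(x_j) for every j = 1, …, g, where U' is the formal derivative of U. -/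
open Polynomial
open Finset

/-- Let `F` be a field, `x₁, …, x_g` pairwise distinct, `v₁, …, v_g ∈ F`, and
`U(z) = ∏ (z − x_j)`. With `F_i = ∑_j x_j^{i−1} v_j`, `D(z) = ∑_{i=1}^g F_i z^{g+1−i}`,
`U·D = ∑_{k=0}^{2g} q_k z^k` and `Q(z) = ∑_{k=0}^{g−1} q_{g+1+k} z^k`, we have
`Q(x_j) = v_j · U'(x_j)` for every `j`, where `U'` is the formal derivative of `U`.
(Indices are 0-based here: `F i = ∑_j x_j^i v_j` for `i : Fin g` and the corresponding
monomial in `D` is `z^(g−i)`.) -/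
theorem Q_eval_eq_v_mul_derivative_U
    (F : Type*) [Field F] (g : ℕ)
    (x : Fin g → F) (hx : Function.Injective x)
    (v : Fin g → F)
    (U : F[X]) (hU : U = ∏ j : Fin g, (X - C (x j)))
    (Fc : Fin g → F) (hFc : ∀ i : Fin g, Fc i = ∑ j : Fin g, x j ^ (i : ℕ) * v j)
    (D : F[X]) (hD : D = ∑ i : Fin g, C (Fc i) * X ^ (g - (i : ℕ)))
    (Q : F[X]) (hQ : Q = ∑ k ∈ Finset.range g, C ((U * D).coeff (g + 1 + k)) * X ^ k) :
    ∀ j : Fin g, Q.eval (x j) = v j * (derivative U).eval (x j) := by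
  intro j
  have hg : 0 < g := j.pos
  set Uj : Fin g → F[X] := fun k => ∏ l ∈ univ.erase k, (X - C (x l)) with hUj
  set S : F[X] := ∑ k : Fin g, C (v k) * Uj k with hS
  -- rewrite D
  have hD' : D = ∑ k : Fin g, C (v k) * ∑ i ∈ range g, (C (x k)) ^ i * X ^ (g - i) := by
    rw [hD]
    simp only [hFc, map_sum, Finset.sum_mul]
    rw [Finset.sum_comm]
    refine Finset.sum_congr rfl fun k _ => ?_
    rw [Finset.mul_sum, Fin.sum_univ_eq_sum_range (fun i => C (x k ^ i * v k) * X ^ (g - i))]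
    refine Finset.sum_congr rfl fun i _ => ?_
    rw [map_mul, ← C_pow]
    ring
  -- telescoping identity
  have tele : ∀ a : F, (X - C a) * (∑ i ∈ range g, (C a) ^ i * X ^ (g - i))
      = X ^ (g + 1) - C (a ^ g) * X := by
    intro a
    have h1 : (∑ i ∈ range g, (C a) ^ i * X ^ (g - i))
        = X * ∑ i ∈ range g, (C a) ^ i * X ^ (g - 1 - i) := by
      rw [Finset.mul_sum]
      refine Finset.sum_congr rfl fun i hi => ?_
      rw [Finset.mem_range] at hi
      have h : g - i = (g - 1 - i) + 1 := by omega
      rw [h, pow_succ]; ring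
    have h2 := geom_sum₂_mul (C a) (X : F[X]) g
    have h3 : (X - C a) * (∑ i ∈ range g, (C a) ^ i * X ^ (g - 1 - i))
        = X ^ g - (C a) ^ g := by linear_combination -h2
    rw [h1, show (X - C a) * (X * ∑ i ∈ range g, (C a) ^ i * X ^ (g - 1 - i))
        = X * ((X - C a) * ∑ i ∈ range g, (C a) ^ i * X ^ (g - 1 - i)) by ring, h3,
      C_pow]
    ring
  have hUsplit : ∀ k : Fin g, U = (X - C (x k)) * Uj k := fun k => by
    rw [hU, hUj, ← Finset.mul_prod_erase univ _ (mem_univ k)]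
  -- key identity
  have key : U * D = X ^ (g + 1) * S - ∑ k : Fin g, C (v k * x k ^ g) * (X * Uj k) := by
    rw [hD', Finset.mul_sum]
    have hterm : ∀ k : Fin g,
        U * (C (v k) * ∑ i ∈ range g, (C (x k)) ^ i * X ^ (g - i))
        = X ^ (g + 1) * (C (v k) * Uj k) - C (v k * x k ^ g) * (X * Uj k) := by
      intro k
      rw [hUsplit k]
      calc (X - C (x k)) * Uj k * (C (v k) * ∑ i ∈ range g, (C (x k)) ^ i * X ^ (g - i))
          = C (v k) * Uj k * ((X - C (x k)) * ∑ i ∈ range g, (C (x k)) ^ i * X ^ (g - i)) := by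
            ring
        _ = C (v k) * Uj k * (X ^ (g + 1) - C (x k ^ g) * X) := by rw [tele]
        _ = X ^ (g + 1) * (C (v k) * Uj k) - C (v k * x k ^ g) * (X * Uj k) := by
            rw [map_mul]; ring
    rw [Finset.sum_congr rfl fun k _ => hterm k, Finset.sum_sub_distrib, hS, Finset.mul_sum]
  -- degree bounds
  have hUjdeg : ∀ k : Fin g, (Uj k).natDegree ≤ g - 1 := by
    intro k
    refine (natDegree_prod_le _ _).trans ?_
    simp only [natDegree_X_sub_C, Finset.sum_const, smul_eq_mul, mul_one]
    rw [Finset.card_erase_of_mem (mem_univ k), Finset.card_univ, Fintype.card_fin]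
  have hTdeg : (∑ k : Fin g, C (v k * x k ^ g) * (X * Uj k)).natDegree ≤ g := by
    refine natDegree_sum_le_of_forall_le _ _ fun k _ => ?_
    calc (C (v k * x k ^ g) * (X * Uj k)).natDegree
        ≤ (C (v k * x k ^ g)).natDegree + (X * (Uj k)).natDegree := natDegree_mul_le
      _ ≤ 0 + ((X : F[X]).natDegree + (Uj k).natDegree) := by
          gcongr
          · exact le_of_eq (natDegree_C _)
          · exact natDegree_mul_le
      _ ≤ 0 + (1 + (g - 1)) := by
          gcongr
          · exact le_of_eq natDegree_X
          · exact hUjdeg k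
      _ ≤ g := by omega
  have hSdeg : S.natDegree < g := by
    have h : S.natDegree ≤ g - 1 := by
      refine natDegree_sum_le_of_forall_le _ _ fun k _ => ?_
      calc (C (v k) * Uj k).natDegree ≤ (C (v k)).natDegree + (Uj k).natDegree :=
            natDegree_mul_le
        _ ≤ 0 + (g - 1) := by
            gcongr
            · exact le_of_eq (natDegree_C _)
            · exact hUjdeg k
        _ = g - 1 := by omega
    omega
  -- coefficients of U*D
  have hcoeff : ∀ k, k < g → (U * D).coeff (g + 1 + k) = S.coeff k := by
    intro k hk
    rw [key, coeff_sub, show g + 1 + k = k + (g + 1) by omega, coeff_X_pow_mul,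
      coeff_eq_zero_of_natDegree_lt (lt_of_le_of_lt hTdeg (by omega)), sub_zero]
  -- evaluate Q
  have hQeval : Q.eval (x j) = ∑ k ∈ range g, S.coeff k * (x j) ^ k := by
    rw [hQ, eval_finset_sum]
    refine Finset.sum_congr rfl fun k hk => ?_
    rw [eval_mul, eval_C, eval_pow, eval_X, hcoeff k (Finset.mem_range.mp hk)]
  have hSeval : S.eval (x j) = ∑ k ∈ range g, S.coeff k * (x j) ^ k :=
    eval_eq_sum_range' hSdeg _
  -- evaluate S
  have hUjzero : ∀ k : Fin g, k ≠ j → (Uj k).eval (x j) = 0 := by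
    intro k hkj
    rw [hUj, eval_prod]
    refine Finset.prod_eq_zero (Finset.mem_erase.mpr ⟨hkj.symm, mem_univ j⟩) ?_
    simp
  have hS_eval : S.eval (x j) = v j * (Uj j).eval (x j) := by
    rw [hS, eval_finset_sum]
    rw [Finset.sum_eq_single j (fun k _ hkj => by
      rw [eval_mul, eval_C, hUjzero k hkj, mul_zero]) (fun h => absurd (mem_univ j) h)]
    rw [eval_mul, eval_C]
  -- derivative
  have hder : (derivative U).eval (x j) = (Uj j).eval (x j) := by
    rw [hUsplit j, derivative_mul, derivative_sub, derivative_X, derivative_C, sub_zero,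
      one_mul, eval_add, eval_mul, eval_sub, eval_X, eval_C, sub_self, zero_mul, add_zero]
  rw [hQeval, ← hSeval, hS_eval, hder]
end

section
/- Let F be a field, let x₁, …, x_g be pairwise distinct elements of F, let y₁, …, y_g be nonzero elements of F, and let ξ₁, …, ξ_g ∈ F. Let U(z) = ∏_{j=1}^g (z − x_j). For i = 1, …, g set F_i = ∑_{j=1}^g x_j^{i−1} ξ_j / y_j, let D(z) = ∑_{i=1}^g F_i z^{g+1−i}, write U(z)·D(z) = ∑_{k=0}^{2g} q_k z^k, and define Q(z) = ∑_{k=0}^{g−1} q_{g+1+k} z^k. Let V ∈ F[z] be a polynomial with V(x_j) = y_j for all j. Then U' is invertible modulo U, and the unique polynomial T of degree at most g−1 with T ≡ Q·V·(U')^{−1} (mod U) satisfies T(x_j) = ξ_j for every j = 1, …, g; that is, T interpolates the data {(x_j, ξ_j)}. -/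
open Polynomial

/-- Let `F` be a field, `x₁, …, x_g` pairwise distinct, `y₁, …, y_g` nonzero,
`ξ₁, …, ξ_g ∈ F`, and `U(z) = ∏ (z − x_j)`. With `F_i = ∑_j x_j^{i−1} ξ_j / y_j`,
`D(z) = ∑_{i=1}^g F_i z^{g+1−i}`, `U·D = ∑_{k=0}^{2g} q_k z^k`,
`Q(z) = ∑_{k=0}^{g−1} q_{g+1+k} z^k`, and `V` a polynomial with `V(x_j) = y_j` for all `j`:
the derivative `U'` is invertible modulo `U` (there is `S` with `U'·S ≡ 1 (mod U)`), and the
unique polynomial `T` of degree at most `g − 1` with `T ≡ Q·V·(U')⁻¹ (mod U)` satisfies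
`T(x_j) = ξ_j` for every `j`. (Indices are 0-based: `F i = ∑_j x_j^i ξ_j / y_j` and the
corresponding monomial in `D` is `z^(g−i)`; `(U')⁻¹` is represented by any `S` inverting `U'`
modulo `U`.) -/
theorem T_interpolates_xi
    (F : Type*) [Field F] (g : ℕ)
    (x : Fin g → F) (hx : Function.Injective x)
    (y : Fin g → F) (hy : ∀ j, y j ≠ 0)
    (ξ : Fin g → F)
    (U : F[X]) (hU : U = ∏ j : Fin g, (X - C (x j)))
    (Fc : Fin g → F) (hFc : ∀ i : Fin g, Fc i = ∑ j : Fin g, x j ^ (i : ℕ) * ξ j / y j)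
    (D : F[X]) (hD : D = ∑ i : Fin g, C (Fc i) * X ^ (g - (i : ℕ)))
    (Q : F[X]) (hQ : Q = ∑ k ∈ Finset.range g, C ((U * D).coeff (g + 1 + k)) * X ^ k)
    (V : F[X]) (hV : ∀ j, V.eval (x j) = y j) :
    (∃ S : F[X], U ∣ derivative U * S - 1) ∧
      ∀ S T : F[X], U ∣ derivative U * S - 1 → T.degree < g →
        U ∣ T - Q * V * S → ∀ j : Fin g, T.eval (x j) = ξ j := by
  constructor
  · have hsep : U.Separable := by
      rw [hU]; exact separable_prod_X_sub_C_iff.2 hx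
    obtain ⟨a, b, hab⟩ := hsep
    exact ⟨b, ⟨-a, by linear_combination hab⟩⟩
  intro S T hS hT hTQ j
  have hg : 0 < g := j.pos
  -- the "partial products"
  set Uj : Fin g → F[X] := fun j => ∏ k ∈ Finset.univ.erase j, (X - C (x k)) with hUj
  have hfac : ∀ j : Fin g, U = (X - C (x j)) * Uj j := fun j => by
    rw [hU, ← Finset.mul_prod_erase _ _ (Finset.mem_univ j)]
  -- degree bound on Uj
  have hdegUj : ∀ m : Fin g, (Uj m).natDegree ≤ g - 1 := by
    intro m
    refine le_trans (natDegree_prod_le _ _) ?_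
    refine le_trans (Finset.sum_le_card_nsmul _ _ 1 fun k _ => natDegree_X_sub_C_le _) ?_
    simp [Finset.card_erase_of_mem, Finset.card_univ]
  -- rewrite D
  have hD2 : D = ∑ m : Fin g,
      C (ξ m / y m) * (X * ∑ i ∈ Finset.range g, C (x m) ^ i * X ^ (g - 1 - i)) := by
    rw [hD]
    simp only [hFc, map_sum, Finset.sum_mul]
    rw [Finset.sum_comm]
    refine Finset.sum_congr rfl fun m _ => ?_
    rw [show C (ξ m / y m) * (X * ∑ i ∈ Finset.range g, C (x m) ^ i * X ^ (g - 1 - i)) =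
        ∑ i ∈ Finset.range g, C (ξ m / y m) * (X * (C (x m) ^ i * X ^ (g - 1 - i))) by
        rw [Finset.mul_sum, Finset.mul_sum],
      ← Fin.sum_univ_eq_sum_range
        (fun i => C (ξ m / y m) * (X * (C (x m) ^ i * X ^ (g - 1 - i))))]
    refine Finset.sum_congr rfl fun i _ => ?_
    have hi : g - (i : ℕ) = (g - 1 - (i : ℕ)) + 1 := by omega
    rw [hi, pow_succ, show x m ^ (i : ℕ) * ξ m / y m = ξ m / y m * x m ^ (i : ℕ) by ring,
      map_mul, map_pow]
    ring
  -- the product identity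
  have hUD : U * D = ∑ m : Fin g,
      C (ξ m / y m) * (Uj m * (X ^ (g + 1) - C (x m ^ g) * X)) := by
    rw [hD2, Finset.mul_sum]
    refine Finset.sum_congr rfl fun m _ => ?_
    have key : (X - C (x m)) * (X * ∑ i ∈ Finset.range g, C (x m) ^ i * X ^ (g - 1 - i)) =
        X ^ (g + 1) - C (x m ^ g) * (X : F[X]) := by
      have h := geom_sum₂_mul (C (x m)) (X : F[X]) g
      rw [map_pow]
      linear_combination (-(X : F[X])) * h
    rw [hfac m, ← key]; ring
  -- the reduced Q
  set R : F[X] := ∑ m : Fin g, C (ξ m / y m) * Uj m with hR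
  have hcoeff : ∀ k ∈ Finset.range g, (U * D).coeff (g + 1 + k) = R.coeff k := by
    intro k hk
    rw [hUD, hR, finset_sum_coeff, finset_sum_coeff]
    refine Finset.sum_congr rfl fun m _ => ?_
    have e1 : Uj m * (X ^ (g + 1) - C (x m ^ g) * X) =
        Uj m * X ^ (g + 1) - C (x m ^ g) * (Uj m * X) := by ring
    have h1 : (Uj m * X ^ (g + 1)).coeff (g + 1 + k) = (Uj m).coeff k := by
      rw [show g + 1 + k = k + (g + 1) by ring, coeff_mul_X_pow]
    have h2 : (Uj m * X).coeff (g + 1 + k) = 0 := by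
      rw [show g + 1 + k = (g + k) + 1 by ring, coeff_mul_X]
      exact coeff_eq_zero_of_natDegree_lt (lt_of_le_of_lt (hdegUj m) (by omega))
    rw [coeff_C_mul, coeff_C_mul, e1, coeff_sub, h1, coeff_C_mul, h2, mul_zero, sub_zero]
  have hdegR : R.natDegree < g := by
    refine lt_of_le_of_lt (natDegree_sum_le_of_forall_le _ _ fun m _ => ?_) (by omega : g - 1 < g)
    exact le_trans (natDegree_C_mul_le _ _) (hdegUj m)
  have hQR : Q = R := by
    rw [hQ, Finset.sum_congr rfl fun k hk => by rw [hcoeff k hk]]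
    simp only [C_mul_X_pow_eq_monomial]
    exact (R.as_sum_range' g hdegR).symm
  -- evaluations
  have hUjj : ∀ m : Fin g, m ≠ j → (Uj m).eval (x j) = 0 := by
    intro m hm
    rw [hUj, eval_prod]
    refine Finset.prod_eq_zero (Finset.mem_erase.2 ⟨hm.symm, Finset.mem_univ j⟩) ?_
    simp
  have hQev : Q.eval (x j) = ξ j / y j * (Uj j).eval (x j) := by
    rw [hQR, hR, eval_finset_sum]
    rw [Finset.sum_eq_single j (fun m _ hm => by simp [hUjj m hm]) (by simp)]
    simp
  have hU'ev : (derivative U).eval (x j) = (Uj j).eval (x j) := by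
    rw [hfac j, derivative_mul]
    simp
  have hUev : U.eval (x j) = 0 := by
    rw [hfac j, eval_mul]; simp
  obtain ⟨W, hW⟩ := hTQ
  have hTev : T.eval (x j) = Q.eval (x j) * V.eval (x j) * S.eval (x j) := by
    have := congrArg (eval (x j)) hW
    simp only [eval_sub, eval_mul, hUev, zero_mul] at this
    linear_combination this
  obtain ⟨W', hW'⟩ := hS
  have hSev : (derivative U).eval (x j) * S.eval (x j) = 1 := by
    have := congrArg (eval (x j)) hW'
    simp only [eval_sub, eval_mul, eval_one, hUev, zero_mul] at this
    linear_combination this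
  rw [hTev, hQev, hV j, ← hU'ev]
  calc ξ j / y j * (derivative U).eval (x j) * y j * S.eval (x j)
      = ξ j / y j * y j * ((derivative U).eval (x j) * S.eval (x j)) := by ring
    _ = ξ j := by rw [hSev, mul_one, div_mul_cancel₀ _ (hy j)]
end

section
/- Let F be a field of characteristic zero, let g ≥ 1, let f ∈ F[z], and let G ∈ F⟦t⟧^g. Let X(t) = (x₁(t), …, x_g(t)) ∈ F⟦t⟧^g be a solution of H(X(t))·X'(t) = G(t) with x₁(0), …, x_g(0) pairwise distinct and with y_i(0) ≠ 0, where y_i(t) is the unique square root of f(x_i(t)) with prescribed nonzero constant coefficient y_i(0). Let m ≥ 1 and let X_m(t) ∈ F⟦t⟧^g satisfy X_m(t) ≡ X(t) (mod t^m). Let y_i^{(m)}(t) be the unique square root of f(x_i^{(m)}(t)) with constant coefficient y_i(0), let H(X_m(t)) be the g×g matrix with entries x_j^{(m)}(t)^{i−1}/y_j^{(m)}(t) (which is invertible over F⟦t⟧), and define X_{2m}(t) = X_m(t) + H(X_m(t))^{−1} · ∫ (G(t) − H(X_m(t))·X_m'(t)) dt, where ∫ denotes the componentwise formal antiderivative with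 zero constant term. Then X_{2m}(t) ≡ X(t) (mod t^{2m}). -/
/-- The formal antiderivative (with zero constant term) of a formal power series over a field
of characteristic zero: `∫ (∑ aₙ tⁿ) dt = ∑ (aₙ/(n+1)) t^{n+1}`. -/
noncomputable def PowerSeries.integral {F : Type*} [Field F] [CharZero F]
    (a : PowerSeries F) : PowerSeries F :=
  PowerSeries.mk fun n => if n = 0 then 0 else PowerSeries.coeff (n - 1) a / (n : F)

open PowerSeries

namespace NewtonAux

variable {F : Type*} [Field F]

lemma coeff_derivFun {R : Type*} [CommRing R] (f : PowerSeries R) (n : ℕ) :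
    coeff n (derivativeFun f) = coeff (n + 1) f * (n + 1) := coeff_derivative f n

lemma derivFun_C {R : Type*} [CommRing R] (r : R) :
    derivativeFun (C r : PowerSeries R) = 0 := derivative_C

lemma derivFun_sub {R : Type*} [CommRing R] (a b : PowerSeries R) :
    derivativeFun (a - b) = derivativeFun a - derivativeFun b := by
  ext n
  simp [coeff_derivFun, map_sub, sub_mul]

lemma derivFun_sum {R : Type*} [CommRing R] {ι : Type*} (s : Finset ι)
    (v : ι → PowerSeries R) :
    derivativeFun (∑ j ∈ s, v j) = ∑ j ∈ s, derivativeFun (v j) := by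
  ext n
  simp [coeff_derivFun, Finset.sum_mul]

lemma integral_sub_dvd [CharZero F] {N : ℕ} {d s : PowerSeries F}
    (hd : (X : PowerSeries F) ^ N ∣ d - derivativeFun s)
    (hs0 : constantCoeff s = 0) :
    (X : PowerSeries F) ^ (N + 1) ∣ PowerSeries.integral d - s := by
  rw [X_pow_dvd_iff] at hd ⊢
  intro n hn
  rw [map_sub]
  cases n with
  | zero =>
      rw [PowerSeries.integral, coeff_mk, if_pos rfl]
      rw [coeff_zero_eq_constantCoeff, hs0, sub_zero]
  | succ j =>
      have h1 := hd j (by omega)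
      rw [map_sub, coeff_derivFun, sub_eq_zero] at h1
      rw [PowerSeries.integral, coeff_mk, if_neg (Nat.succ_ne_zero j),
        Nat.add_sub_cancel, h1]
      have hj : ((j : F) + 1) ≠ 0 := by
        exact_mod_cast (Nat.cast_ne_zero (R := F)).mpr (Nat.succ_ne_zero j)
      push_cast
      rw [mul_div_assoc, div_self hj, mul_one, sub_self]

lemma dvd_of_unit_mul {R : Type*} [CommRing R] {v z w : R} (hv : IsUnit v)
    (h : w ∣ v * z) : w ∣ z := by
  obtain ⟨u, hu⟩ := hv.exists_left_inv
  have : z = u * (v * z) := by rw [← mul_assoc, hu, one_mul]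
  rw [this]
  exact h.mul_left u

lemma X_pow_dvd_derivFun {R : Type*} [CommRing R] {N : ℕ} {h : PowerSeries R}
    (hd : (X : PowerSeries R) ^ (N + 1) ∣ h) : (X : PowerSeries R) ^ N ∣ derivativeFun h := by
  rw [X_pow_dvd_iff] at hd ⊢
  intro n hn
  rw [coeff_derivFun, hd (n + 1) (by omega), zero_mul]

lemma derivFun_pow {R : Type*} [CommRing R] (z : PowerSeries R) (n : ℕ) :
    derivativeFun (z ^ (n + 1)) = C ((n : R) + 1) * (z ^ n * derivativeFun z) := by
  induction n with
  | zero => simp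
  | succ n ih =>
      have h2 : z ^ (n + 2) = z ^ (n + 1) * z := by ring
      rw [h2, derivativeFun_mul, ih]
      simp only [smul_eq_mul, Nat.cast_add, Nat.cast_one, map_add, map_one]
      ring

lemma derivFun_aeval (q : Polynomial F) (z : PowerSeries F) :
    derivativeFun (Polynomial.aeval z q) =
      Polynomial.aeval z (Polynomial.derivative q) * derivativeFun z := by
  induction q using Polynomial.induction_on' with
  | add p q hp hq => simp only [map_add, derivativeFun_add, hp, hq, add_mul]
  | monomial n a =>
      rw [Polynomial.aeval_monomial, Polynomial.derivative_monomial, Polynomial.aeval_monomial]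
      cases n with
      | zero =>
          simp [derivativeFun_mul, derivFun_C, derivativeFun_one,
            PowerSeries.algebraMap_apply]
      | succ n =>
          rw [derivativeFun_mul, derivFun_pow]
          simp only [smul_eq_mul, Nat.add_sub_cancel]
          have hC : derivativeFun ((algebraMap F (PowerSeries F)) a) = 0 := by
            simp [PowerSeries.algebraMap_apply, derivFun_C]
          rw [hC]
          simp only [PowerSeries.algebraMap_apply, Algebra.algebraMap_self, RingHom.id_apply,
            map_add, map_mul, map_natCast, map_one]
          push_cast
          ring

lemma taylor2 (q : Polynomial F) (a b : PowerSeries F) :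
    ∃ c, Polynomial.aeval a q = Polynomial.aeval b q +
      Polynomial.aeval b (Polynomial.derivative q) * (a - b) + c * (a - b) ^ 2 := by
  obtain ⟨c, hc⟩ := Polynomial.binomExpansion
    (q.map (algebraMap F (PowerSeries F))) b (a - b)
  refine ⟨c, ?_⟩
  rw [show b + (a - b) = a by ring] at hc
  rw [Polynomial.derivative_map] at hc
  simpa [Polynomial.eval_map, Polynomial.aeval_def] using hc

lemma key [CharZero F] (f : Polynomial F) (k M1 : ℕ)
    (a b Y W : PowerSeries F)
    (hYa : Y ^ 2 = Polynomial.aeval a f) (hWb : W ^ 2 = Polynomial.aeval b f)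
    (hY0 : constantCoeff Y ≠ 0) (hW0 : constantCoeff W = constantCoeff Y)
    (hab : (X : PowerSeries F) ^ (M1 + 1) ∣ a - b) :
    (X : PowerSeries F) ^ (2 * M1 + 1) ∣
      (a ^ k * Y⁻¹ * derivativeFun a - b ^ k * W⁻¹ * derivativeFun b
        - derivativeFun (b ^ k * W⁻¹ * (a - b))) := by
  have hW0' : constantCoeff W ≠ 0 := by rw [hW0]; exact hY0
  have hYinv : Y * Y⁻¹ = 1 := PowerSeries.mul_inv_cancel _ hY0
  have hWinv : W * W⁻¹ = 1 := PowerSeries.mul_inv_cancel _ hW0'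
  have hYu : IsUnit Y := PowerSeries.isUnit_iff_constantCoeff.mpr (isUnit_iff_ne_zero.mpr hY0)
  have hWu : IsUnit W := PowerSeries.isUnit_iff_constantCoeff.mpr (isUnit_iff_ne_zero.mpr hW0')
  -- derivative of W⁻¹
  have h0 : derivativeFun (W * W⁻¹) = 0 := by rw [hWinv, derivativeFun_one]
  rw [derivativeFun_mul] at h0
  simp only [smul_eq_mul] at h0
  have hWinvD : derivativeFun W⁻¹ = -(W⁻¹ * (W⁻¹ * derivativeFun W)) := by
    linear_combination W⁻¹ * h0 - derivativeFun W⁻¹ * hWinv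
  have hDbk : derivativeFun (b ^ k) =
      Polynomial.aeval b (Polynomial.derivative ((Polynomial.X : Polynomial F) ^ k)) *
        derivativeFun b := by
    have h := derivFun_aeval ((Polynomial.X : Polynomial F) ^ k) b
    simpa using h
  obtain ⟨c1, hT2'⟩ := taylor2 ((Polynomial.X : Polynomial F) ^ k) a b
  have hT2 : a ^ k = b ^ k +
      Polynomial.aeval b (Polynomial.derivative ((Polynomial.X : Polynomial F) ^ k)) * (a - b)
      + c1 * (a - b) ^ 2 := by simpa using hT2'
  obtain ⟨c2, hT1⟩ := taylor2 f a b
  have hchW : derivativeFun (W * W) =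
      Polynomial.aeval b (Polynomial.derivative f) * derivativeFun b := by
    rw [show W * W = W ^ 2 by ring, hWb, derivFun_aeval]
  rw [derivativeFun_mul] at hchW
  simp only [smul_eq_mul] at hchW
  have hYW : (Y + W) * (Y - W) = Polynomial.aeval a f - Polynomial.aeval b f := by
    linear_combination hYa - hWb
  have hYWu : IsUnit (Y + W) := by
    rw [PowerSeries.isUnit_iff_constantCoeff, map_add, hW0]
    refine isUnit_iff_ne_zero.mpr ?_
    rw [show constantCoeff Y + constantCoeff Y = 2 * constantCoeff Y by ring]
    exact mul_ne_zero two_ne_zero hY0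
  have hWWu : IsUnit (W + W) := by
    rw [PowerSeries.isUnit_iff_constantCoeff, map_add]
    refine isUnit_iff_ne_zero.mpr ?_
    rw [show constantCoeff W + constantCoeff W = 2 * constantCoeff W by ring]
    exact mul_ne_zero two_ne_zero hW0'
  have hfd : (X : PowerSeries F) ^ (M1 + 1) ∣
      Polynomial.aeval a f - Polynomial.aeval b f := by
    have hrw : Polynomial.aeval a f - Polynomial.aeval b f =
        (a - b) * (Polynomial.aeval b (Polynomial.derivative f) + c2 * (a - b)) := by
      linear_combination hT1
    rw [hrw]
    exact hab.mul_right _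
  have hu : (X : PowerSeries F) ^ (M1 + 1) ∣ Y - W := by
    apply dvd_of_unit_mul hYWu
    rw [hYW]; exact hfd
  have hsE : (W + W) * (derivativeFun W * (a - b) - (Y - W) * derivativeFun b)
      = ((Y - W) ^ 2 - c2 * (a - b) ^ 2) * derivativeFun b := by
    linear_combination (a - b) * hchW - derivativeFun b * hYW - derivativeFun b * hT1
  have hsDvd : (X : PowerSeries F) ^ (2 * M1 + 1) ∣
      derivativeFun W * (a - b) - (Y - W) * derivativeFun b := by
    apply dvd_of_unit_mul hWWu
    rw [hsE]
    have hle : (X : PowerSeries F) ^ (2 * M1 + 1) ∣ (X : PowerSeries F) ^ (M1 + 1) *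
        (X : PowerSeries F) ^ (M1 + 1) := by
      rw [← pow_add]; exact pow_dvd_pow _ (by omega)
    have h1 : (X : PowerSeries F) ^ (2 * M1 + 1) ∣ (Y - W) ^ 2 := by
      refine hle.trans ?_
      rw [show (Y - W) ^ 2 = (Y - W) * (Y - W) by ring]
      exact mul_dvd_mul hu hu
    have h2 : (X : PowerSeries F) ^ (2 * M1 + 1) ∣ c2 * (a - b) ^ 2 := by
      refine Dvd.dvd.mul_left ?_ c2
      refine hle.trans ?_
      rw [show (a - b) ^ 2 = (a - b) * (a - b) by ring]
      exact mul_dvd_mul hab hab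
    exact (dvd_sub h1 h2).mul_right _
  have habD := X_pow_dvd_derivFun hab
  obtain ⟨eh', heh'0⟩ := habD
  obtain ⟨eh, heh⟩ := hab
  obtain ⟨uh, huh⟩ := hu
  obtain ⟨sh, hsh⟩ := hsDvd
  have he2 : a = b + (X : PowerSeries F) ^ (M1 + 1) * eh := by linear_combination heh
  have ha2 : derivativeFun a = derivativeFun b + (X : PowerSeries F) ^ M1 * eh' := by
    rw [derivFun_sub] at heh'0
    linear_combination heh'0
  have hu2 : Y = W + (X : PowerSeries F) ^ (M1 + 1) * uh := by linear_combination huh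
  have hs' : derivativeFun W * (a - b) = (Y - W) * derivativeFun b
      + (X : PowerSeries F) ^ (2 * M1 + 1) * sh := by linear_combination hsh
  have hTexp : derivativeFun (b ^ k * W⁻¹ * (a - b)) =
      b ^ k * W⁻¹ * (derivativeFun a - derivativeFun b)
        + (a - b) * (b ^ k * (-(W⁻¹ * (W⁻¹ * derivativeFun W)))
          + W⁻¹ * (Polynomial.aeval b (Polynomial.derivative
              ((Polynomial.X : Polynomial F) ^ k)) * derivativeFun b)) := by
    rw [derivativeFun_mul, derivativeFun_mul, derivFun_sub, hWinvD, hDbk]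
    simp only [smul_eq_mul]
    try ring
  set Da := derivativeFun a with hDa
  set Db := derivativeFun b with hDb
  set DW := derivativeFun W with hDW
  set d := Polynomial.aeval b (Polynomial.derivative ((Polynomial.X : Polynomial F) ^ k))
    with hdd
  have hbig : Y * (W * (W * (a ^ k * Y⁻¹ * Da - b ^ k * W⁻¹ * Db
      - derivativeFun (b ^ k * W⁻¹ * (a - b)))))
      = (X : PowerSeries F) ^ (2 * M1 + 1) *
        (W * b ^ k * sh - W * b ^ k * (eh' * uh) + W ^ 2 * (d * (eh * eh'))
          + X * (uh ^ 2 * Db * b ^ k - eh * uh * Db * (W * d) + eh ^ 2 * Db * (W ^ 2 * c1))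
          + X * (X : PowerSeries F) ^ M1 * (uh * sh * b ^ k + eh ^ 2 * eh' * (W ^ 2 * c1))) := by
    rw [hTexp]
    linear_combination (a ^ k * Da * W ^ 2) * hYinv
      + (- Da * Y * W * b ^ k - b * Y * DW * b ^ k - b * Y * W * DW * W⁻¹ * b ^ k
          + b * Db * Y * W * d + a * Y * DW * b ^ k + a * Y * W * DW * W⁻¹ * b ^ k
          - a * Db * Y * W * d) * hWinv
      + (Da * W ^ 2) * hT2
      + (Y * b ^ k) * hs'
      + (- Db * Y * W * d + Da * W ^ 2 * c1 * (X * (X : PowerSeries F) ^ M1) * eh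
          + Da * W ^ 2 * d - b * Da * W ^ 2 * c1 + a * Da * W ^ 2 * c1) * he2
      + (W ^ 2 * b ^ k + W ^ 2 * c1 * (X * (X : PowerSeries F) ^ M1) ^ 2 * eh ^ 2
          + W ^ 2 * d * (X * (X : PowerSeries F) ^ M1) * eh - Y * W * b ^ k) * ha2
      + ((X * (X : PowerSeries F) ^ M1 * (X : PowerSeries F) ^ M1) * sh * b ^ k
          - W * (X : PowerSeries F) ^ M1 * eh' * b ^ k
          + Db * (X * (X : PowerSeries F) ^ M1) * uh * b ^ k - Db * W * b ^ k
          - Db * W * d * (X * (X : PowerSeries F) ^ M1) * eh + Db * Y * b ^ k) * hu2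
  have hdvd3 : (X : PowerSeries F) ^ (2 * M1 + 1) ∣
      Y * (W * (W * (a ^ k * Y⁻¹ * Da - b ^ k * W⁻¹ * Db
        - derivativeFun (b ^ k * W⁻¹ * (a - b))))) := ⟨_, hbig⟩
  exact dvd_of_unit_mul hWu (dvd_of_unit_mul hWu (dvd_of_unit_mul hYu hdvd3))

end NewtonAux

open NewtonAux in

/-- Let `F` be a field of characteristic zero, `g ≥ 1`, `f ∈ F[z]`,
`G ∈ F⟦t⟧^g`. Let `X(t)` solve `H(X(t))·X'(t) = G(t)` with pairwise distinct `x_i(0)` and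
nonzero `y_i(0)`, where `y_i(t)` is the unique square root of `f(x_i(t))` with constant
coefficient `y_i(0)`. For `m ≥ 1` let `X_m ≡ X (mod t^m)`, let `y_i^{(m)}` be the unique
square root of `f(x_i^{(m)})` with constant coefficient `y_i(0)`, let `H(X_m)` be the matrix
with entries `x_j^{(m)}{}^{i−1}/y_j^{(m)}` (which is invertible over `F⟦t⟧`), and set
`X_{2m} = X_m + H(X_m)⁻¹·∫(G − H(X_m)·X_m') dt`. Then `X_{2m} ≡ X (mod t^{2m})`. -/
theorem newton_iteration_doubles_precision
    (F : Type*) [Field F] [CharZero F] (g : ℕ) (hg : 1 ≤ g)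
    (f : Polynomial F) (G : Fin g → PowerSeries F)
    (X : Fin g → PowerSeries F)
    (hx₀ : Function.Injective fun i => PowerSeries.constantCoeff (X i))
    (Y : Fin g → PowerSeries F)
    (hy₀ : ∀ i, PowerSeries.constantCoeff (Y i) ≠ 0)
    (hY : ∀ i, Y i ^ 2 = Polynomial.aeval (X i) f)
    (hsol : ∀ i : Fin g,
      ∑ j : Fin g, X j ^ (i : ℕ) * (Y j)⁻¹ * PowerSeries.derivativeFun (X j) = G i)
    (m : ℕ) (hm : 1 ≤ m)
    (Xm : Fin g → PowerSeries F)
    (hXm : ∀ i, ∀ n < m, PowerSeries.coeff n (Xm i) = PowerSeries.coeff n (X i))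
    (Ym : Fin g → PowerSeries F)
    (hYm : ∀ i, Ym i ^ 2 = Polynomial.aeval (Xm i) f ∧
      PowerSeries.constantCoeff (Ym i) = PowerSeries.constantCoeff (Y i))
    (Hm : Matrix (Fin g) (Fin g) (PowerSeries F))
    (hHm : Hm = Matrix.of fun i j : Fin g => Xm j ^ (i : ℕ) * (Ym j)⁻¹)
    (X2m : Fin g → PowerSeries F)
    (hX2m : X2m = fun i =>
      Xm i +
        Hm⁻¹.mulVec
          (fun i' => PowerSeries.integral
            (G i' - Hm.mulVec (fun j => PowerSeries.derivativeFun (Xm j)) i')) i) :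
    IsUnit Hm.det ∧
      ∀ i, ∀ n < 2 * m, PowerSeries.coeff n (X2m i) = PowerSeries.coeff n (X i) := by
  classical
  obtain ⟨M1, rfl⟩ : ∃ M1, m = M1 + 1 := ⟨m - 1, by omega⟩
  have hXm0 : ∀ j, PowerSeries.constantCoeff (Xm j) = PowerSeries.constantCoeff (X j) :=
    fun j => by
      have := hXm j 0 (by omega)
      simpa using this
  have hYm0ne : ∀ j, PowerSeries.constantCoeff (Ym j) ≠ 0 := fun j => by
    rw [(hYm j).2]; exact hy₀ j
  -- Part 1: the determinant is a unit
  have hdet : IsUnit Hm.det := by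
    rw [PowerSeries.isUnit_iff_constantCoeff]
    refine isUnit_iff_ne_zero.mpr ?_
    have hmap : (PowerSeries.constantCoeff) Hm.det
        = ((Hm.map (PowerSeries.constantCoeff)).det) :=
      RingHom.map_det (PowerSeries.constantCoeff) Hm
    have hMat : Hm.map (PowerSeries.constantCoeff) = Matrix.of fun i j =>
        (PowerSeries.constantCoeff (Y j))⁻¹ *
          (Matrix.transpose
            (Matrix.vandermonde (fun j => PowerSeries.constantCoeff (X j))) i j) := by
      ext i j
      simp [hHm, Matrix.map_apply, Matrix.vandermonde, Matrix.transpose_apply,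
        PowerSeries.constantCoeff_inv, hXm0, (hYm j).2, mul_comm]
    rw [hmap, hMat, Matrix.det_mul_row, Matrix.det_transpose]
    refine mul_ne_zero ?_ ?_
    · exact Finset.prod_ne_zero_iff.mpr fun j _ => inv_ne_zero (hy₀ j)
    · exact Matrix.det_vandermonde_ne_zero_iff.mpr hx₀
  refine ⟨hdet, ?_⟩
  -- divisibility of X j - Xm j
  have hdXXm : ∀ j, (PowerSeries.X : PowerSeries F) ^ (M1 + 1) ∣ (X j - Xm j) := fun j => by
    rw [PowerSeries.X_pow_dvd_iff]
    intro n hn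
    rw [map_sub, hXm j n hn, sub_self]
  have hkey : ∀ i j : Fin g, (PowerSeries.X : PowerSeries F) ^ (2 * M1 + 1) ∣
      (X j ^ (i : ℕ) * (Y j)⁻¹ * PowerSeries.derivativeFun (X j)
        - Xm j ^ (i : ℕ) * (Ym j)⁻¹ * PowerSeries.derivativeFun (Xm j)
        - PowerSeries.derivativeFun (Xm j ^ (i : ℕ) * (Ym j)⁻¹ * (X j - Xm j))) :=
    fun i j => key f (i : ℕ) M1 (X j) (Xm j) (Y j) (Ym j) (hY j) ((hYm j).1)
      (hy₀ j) ((hYm j).2) (hdXXm j)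
  set S : Fin g → PowerSeries F :=
    fun i => ∑ j, Xm j ^ (i : ℕ) * (Ym j)⁻¹ * (X j - Xm j) with hS
  have hsum : ∀ i, (PowerSeries.X : PowerSeries F) ^ (2 * M1 + 1) ∣
      (G i - Hm.mulVec (fun j => PowerSeries.derivativeFun (Xm j)) i
        - PowerSeries.derivativeFun (S i)) := by
    intro i
    have hrw : G i - Hm.mulVec (fun j => PowerSeries.derivativeFun (Xm j)) i
        - PowerSeries.derivativeFun (S i)
        = ∑ j, (X j ^ (i : ℕ) * (Y j)⁻¹ * PowerSeries.derivativeFun (X j)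
            - Xm j ^ (i : ℕ) * (Ym j)⁻¹ * PowerSeries.derivativeFun (Xm j)
            - PowerSeries.derivativeFun (Xm j ^ (i : ℕ) * (Ym j)⁻¹ * (X j - Xm j))) := by
      rw [← hsol i, hS]
      simp only [Matrix.mulVec, dotProduct, hHm, Matrix.of_apply, derivFun_sum]
      rw [← Finset.sum_sub_distrib, ← Finset.sum_sub_distrib]
      try exact Finset.sum_congr rfl fun j _ => by ring
    rw [hrw]
    exact Finset.dvd_sum fun j _ => hkey i j
  have hS0 : ∀ i, PowerSeries.constantCoeff (S i) = 0 := fun i => by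
    rw [hS, map_sum]
    refine Finset.sum_eq_zero fun j _ => ?_
    rw [map_mul, map_sub, hXm0 j, sub_self, mul_zero]
  have hint : ∀ i, (PowerSeries.X : PowerSeries F) ^ (2 * M1 + 1 + 1) ∣
      PowerSeries.integral (G i - Hm.mulVec (fun j => PowerSeries.derivativeFun (Xm j)) i)
        - S i := fun i => integral_sub_dvd (by simpa [sub_sub] using hsum i) (hS0 i)
  have hSw : S = Hm.mulVec (fun j => X j - Xm j) := by
    funext i
    simp only [hS, Matrix.mulVec, dotProduct, hHm, Matrix.of_apply]
  -- final computation
  intro i n hn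
  have hfin : (PowerSeries.X : PowerSeries F) ^ (2 * M1 + 1 + 1) ∣ X2m i - X i := by
    have hX2 : X2m i - X i = Hm⁻¹.mulVec
        (fun i' => PowerSeries.integral
          (G i' - Hm.mulVec (fun j => PowerSeries.derivativeFun (Xm j)) i') - S i') i := by
      have hdecomp : (fun i' => PowerSeries.integral
          (G i' - Hm.mulVec (fun j => PowerSeries.derivativeFun (Xm j)) i'))
          = (fun i' => PowerSeries.integral
            (G i' - Hm.mulVec (fun j => PowerSeries.derivativeFun (Xm j)) i') - S i') + S := by
        funext i'
        simp
      rw [hX2m, hdecomp, Matrix.mulVec_add, hSw, Matrix.mulVec_mulVec,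
        Matrix.nonsing_inv_mul Hm hdet, Matrix.one_mulVec]
      simp only [Pi.add_apply]
      ring
    rw [hX2]
    simp only [Matrix.mulVec, dotProduct]
    exact Finset.dvd_sum fun j _ => (hint j).mul_left _
  rw [PowerSeries.X_pow_dvd_iff] at hfin
  have := hfin n (by omega)
  rw [map_sub, sub_eq_zero] at this
  exact this
end

section
/- Let K ⊆ L be fields of characteristic zero with L/K a finite Galois extension, let g ≥ 1, let f ∈ K[z], and let G ∈ K⟦t⟧^g. Let U₀(z) = ∏_{i=1}^g (z − x_i⁽⁰⁾) ∈ K[z] be a separable polynomial whose roots x₁⁽⁰⁾, …, x_g⁽⁰⁾ lie in L, and let V₀ ∈ K[z] be a polynomial such that y_i⁽⁰⁾ := V₀(x_i⁽⁰⁾) is nonzero and satisfies (y_i⁽⁰⁾)² = f(x_i⁽⁰⁾) for all i. Let X(t) = (x₁(t), …, x_g(t)) ∈ L⟦t⟧^g be the unique solution of the system H(X(t))·X'(t) = G(t) with x_i(0) = x_i⁽⁰⁾ and y_i(0) = y_i⁽⁰⁾. Then the polynomial U(t, z) = ∏_{i=1}^g (z − x_i(t)) has all its coefficients in K⟦t⟧,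 i.e. U(t,z) ∈ K⟦t⟧[z]. -/
open PowerSeries Finset

namespace MumfordAux

variable {L : Type*} [Field L]

theorem coeff_derivativeFun' (f : PowerSeries L) (n : ℕ) :
    coeff n (derivativeFun f) = coeff (n + 1) f * (n + 1) :=
  coeff_derivative f n

/-- coefficients agree up to `n` -/
def CEq (n : ℕ) (A B : PowerSeries L) : Prop := ∀ m ≤ n, coeff m A = coeff m B

theorem CEq.mul {n : ℕ} {A B C D : PowerSeries L} (h1 : CEq n A B) (h2 : CEq n C D) :
    CEq n (A * C) (B * D) := by
  intro m hm
  rw [coeff_mul, coeff_mul]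
  refine Finset.sum_congr rfl fun p hp => ?_
  rw [Finset.HasAntidiagonal.mem_antidiagonal] at hp
  rw [h1 p.1 (le_trans (by omega) hm), h2 p.2 (le_trans (by omega) hm)]

theorem CEq.pow {n : ℕ} {A B : PowerSeries L} (h : CEq n A B) (k : ℕ) :
    CEq n (A ^ k) (B ^ k) := by
  induction k with
  | zero => intro m hm; rfl
  | succ k ih => rw [pow_succ, pow_succ]; exact ih.mul h

theorem CEq.inv {n : ℕ} {A B : PowerSeries L} (h : CEq n A B) : CEq n A⁻¹ B⁻¹ := by
  have h0 : constantCoeff A = constantCoeff B := by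
    simpa [PowerSeries.coeff_zero_eq_constantCoeff] using h 0 (Nat.zero_le n)
  intro m hm
  induction m using Nat.strong_induction_on with
  | _ m ih =>
    rw [PowerSeries.coeff_inv, PowerSeries.coeff_inv, h0]
    split
    · rfl
    · congr 1
      refine Finset.sum_congr rfl fun p hp => ?_
      rw [Finset.HasAntidiagonal.mem_antidiagonal] at hp
      split
      · rename_i hlt
        rw [h p.1 (le_trans (by omega) hm), ih p.2 hlt (le_trans (by omega) hm)]
      · rfl

theorem CEq.aeval {n : ℕ} {A B : PowerSeries L} (h : CEq n A B) (p : Polynomial L) :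
    CEq n (Polynomial.aeval A p) (Polynomial.aeval B p) := by
  induction p using Polynomial.induction_on' with
  | add f g hf hg =>
    intro m hm
    simp only [map_add, hf m hm, hg m hm]
  | monomial k a =>
    rw [Polynomial.aeval_monomial, Polynomial.aeval_monomial]
    exact CEq.mul (fun m _ => rfl) (h.pow k)

theorem coeff_mul_derivativeFun_sub {n : ℕ} {P Q A B : PowerSeries L}
    (hP : CEq n P Q) (hA : CEq n A B) :
    coeff n (P * derivativeFun A) - coeff n (Q * derivativeFun B) =
      constantCoeff P * (((n : L) + 1) * (coeff (n + 1) A - coeff (n + 1) B)) := by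
  rw [coeff_mul, coeff_mul, ← Finset.sum_sub_distrib]
  rw [Finset.sum_eq_single (0, n)]
  · have hc : (coeff 0) P = (coeff 0) Q := hP 0 (Nat.zero_le n)
    show coeff 0 P * coeff n (derivativeFun A) - coeff 0 Q * coeff n (derivativeFun B) = _
    rw [← hc, coeff_derivativeFun', coeff_derivativeFun', PowerSeries.coeff_zero_eq_constantCoeff]
    push_cast
    ring
  · intro p hp hne
    rw [Finset.HasAntidiagonal.mem_antidiagonal] at hp
    have h2 : p.2 < n := by
      rcases Nat.lt_or_ge p.2 n with h | h
      · exact h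
      · exfalso; apply hne
        have : p.2 = n := le_antisymm (by omega) h
        have : p.1 = 0 := by omega
        exact Prod.ext this ‹p.2 = n›
    rw [coeff_derivativeFun', coeff_derivativeFun', hP p.1 (by omega),
      hA (p.2 + 1) (by omega), sub_self]
  · intro hmem
    exfalso; exact hmem (Finset.HasAntidiagonal.mem_antidiagonal.mpr (by omega))

theorem coeff_sq_sub {n : ℕ} {Y Z : PowerSeries L} (h : CEq n Y Z) :
    coeff (n + 1) (Y * Y) - coeff (n + 1) (Z * Z) =
      2 * constantCoeff Y * (coeff (n + 1) Y - coeff (n + 1) Z) := by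
  have h0 : constantCoeff Y = constantCoeff Z := by
    simpa [PowerSeries.coeff_zero_eq_constantCoeff] using h 0 (Nat.zero_le n)
  rw [coeff_mul, coeff_mul, ← Finset.sum_sub_distrib]
  have hsub : ({(0, n+1), (n+1, 0)} : Finset (ℕ × ℕ)) ⊆ antidiagonal (n+1) := by
    intro p hp
    simp only [Finset.mem_insert, Finset.mem_singleton] at hp
    rcases hp with rfl | rfl <;> simp [Finset.mem_antidiagonal]
  rw [← Finset.sum_subset hsub]
  · rw [Finset.sum_pair (by simp)]
    simp only [PowerSeries.coeff_zero_eq_constantCoeff]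
    rw [h0]
    ring_nf
  · intro p hp hnp
    rw [Finset.HasAntidiagonal.mem_antidiagonal] at hp
    simp only [Finset.mem_insert, Finset.mem_singleton, not_or] at hnp
    have h1 : p.1 ≤ n := by
      rcases Nat.lt_or_ge p.1 (n+1) with h' | h'
      · omega
      · exfalso; exact hnp.2 (Prod.ext (by omega) (by omega))
    have h2 : p.2 ≤ n := by
      rcases Nat.lt_or_ge p.2 (n+1) with h' | h'
      · omega
      · exfalso; exact hnp.1 (Prod.ext (by omega) (by omega))
    rw [h p.1 h1, h p.2 h2, sub_self]


theorem solution_unique [CharZero L] {g : ℕ}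
    (x₀ y₀ : Fin g → L) (hx₀ : Function.Injective x₀) (hy₀ : ∀ i, y₀ i ≠ 0)
    (fL : Polynomial L)
    (X Y X' Y' : Fin g → PowerSeries L)
    (hX0 : ∀ i, constantCoeff (X i) = x₀ i)
    (hX0' : ∀ i, constantCoeff (X' i) = x₀ i)
    (hY0 : ∀ i, constantCoeff (Y i) = y₀ i)
    (hY0' : ∀ i, constantCoeff (Y' i) = y₀ i)
    (hYsq : ∀ i, Y i ^ 2 = Polynomial.aeval (X i) fL)
    (hYsq' : ∀ i, Y' i ^ 2 = Polynomial.aeval (X' i) fL)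
    (hsol : ∀ i : Fin g,
      ∑ j : Fin g, X j ^ (i : ℕ) * (Y j)⁻¹ * derivativeFun (X j) =
        ∑ j : Fin g, X' j ^ (i : ℕ) * (Y' j)⁻¹ * derivativeFun (X' j)) :
    ∀ i, X i = X' i := by
  have key : ∀ n : ℕ, ∀ i, (∀ m ≤ n, coeff m (X i) = coeff m (X' i)) ∧
      (∀ m ≤ n, coeff m (Y i) = coeff m (Y' i)) := by
    intro n
    induction n with
    | zero =>
      intro i
      constructor <;> intro m hm <;> interval_cases m <;>
        simp only [PowerSeries.coeff_zero_eq_constantCoeff, hX0, hX0', hY0, hY0']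
    | succ n ih =>
      have hCX : ∀ i, CEq n (X i) (X' i) := fun i => (ih i).1
      have hCY : ∀ i, CEq n (Y i) (Y' i) := fun i => (ih i).2
      -- step 1 : X coefficients at n+1
      have hXd : ∀ j, coeff (n + 1) (X j) = coeff (n + 1) (X' j) := by
        have hvan : ∀ i : Fin g, ∑ j : Fin g,
            (((n : L) + 1) * (y₀ j)⁻¹ * (coeff (n + 1) (X j) - coeff (n + 1) (X' j)))
              * x₀ j ^ (i : ℕ) = 0 := by
          intro i
          have h1 := congrArg (coeff n) (hsol i)
          simp only [map_sum] at h1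
          have h2 : ∑ j : Fin g,
              (coeff n (X j ^ (i : ℕ) * (Y j)⁻¹ * derivativeFun (X j)) -
               coeff n (X' j ^ (i : ℕ) * (Y' j)⁻¹ * derivativeFun (X' j))) = 0 := by
            rw [Finset.sum_sub_distrib, h1, sub_self]
          rw [← h2]
          refine Finset.sum_congr rfl fun j _ => ?_
          have hterm := coeff_mul_derivativeFun_sub
            (((hCX j).pow (i : ℕ)).mul (hCY j).inv) (hCX j)
          rw [hterm]
          have hc : constantCoeff (X j ^ (i : ℕ) * (Y j)⁻¹) = x₀ j ^ (i : ℕ) * (y₀ j)⁻¹ := by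
            rw [map_mul, map_pow, hX0, PowerSeries.constantCoeff_inv, hY0]
          rw [hc]
          ring
        have := Matrix.eq_zero_of_forall_pow_sum_mul_pow_eq_zero hx₀ hvan
        intro j
        have hj := congrFun this j
        simp only [Pi.zero_apply] at hj
        have hne1 : ((n : L) + 1) ≠ 0 := by
          have : ((n + 1 : ℕ) : L) ≠ 0 := Nat.cast_ne_zero.mpr (Nat.succ_ne_zero n)
          push_cast at this; exact this
        have hne2 : (y₀ j)⁻¹ ≠ 0 := inv_ne_zero (hy₀ j)
        have := mul_eq_zero.mp hj
        rcases this with h | h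
        · rcases mul_eq_zero.mp h with h' | h'
          · exact absurd h' hne1
          · exact absurd h' hne2
        · exact sub_eq_zero.mp h
      have hCX1 : ∀ i, CEq (n + 1) (X i) (X' i) := by
        intro i m hm
        rcases Nat.lt_or_ge m (n + 1) with h | h
        · exact hCX i m (by omega)
        · have : m = n + 1 := by omega
          rw [this]; exact hXd i
      -- step 2 : Y coefficients at n+1
      have hYd : ∀ j, coeff (n + 1) (Y j) = coeff (n + 1) (Y' j) := by
        intro j
        have h1 : coeff (n + 1) (Y j ^ 2) = coeff (n + 1) (Y' j ^ 2) := by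
          rw [hYsq j, hYsq' j]
          exact (hCX1 j).aeval fL (n + 1) le_rfl
        rw [sq, sq] at h1
        have h2 := coeff_sq_sub (hCY j)
        rw [h1, sub_self] at h2
        have h2' := h2.symm
        rcases mul_eq_zero.mp h2' with h | h
        · exfalso
          rcases mul_eq_zero.mp h with h' | h'
          · exact two_ne_zero h'
          · rw [hY0 j] at h'; exact hy₀ j h'
        · exact sub_eq_zero.mp h
      intro i
      refine ⟨fun m hm => hCX1 i m hm, fun m hm => ?_⟩
      rcases Nat.lt_or_ge m (n + 1) with h | h
      · exact hCY i m (by omega)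
      · have : m = n + 1 := by omega
        rw [this]; exact hYd i
  intro i
  ext m
  exact (key m i).1 m le_rfl

theorem constantCoeff_map' (f : L →+* L) (A : PowerSeries L) :
    constantCoeff (PowerSeries.map f A) = f (constantCoeff A) := by
  rw [← PowerSeries.coeff_zero_eq_constantCoeff, PowerSeries.coeff_map,
    PowerSeries.coeff_zero_eq_constantCoeff]

theorem map_derivativeFun (f : L →+* L) (A : PowerSeries L) :
    PowerSeries.map f (derivativeFun A) = derivativeFun (PowerSeries.map f A) := by
  ext m
  rw [PowerSeries.coeff_map, coeff_derivativeFun', coeff_derivativeFun', PowerSeries.coeff_map,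
    map_mul]
  congr 1
  push_cast
  rw [map_add, map_natCast, map_one]

theorem map_powerSeries_map {R S T : Type*} [CommSemiring R] [CommSemiring S] [CommSemiring T]
    (f : R →+* S) (g : S →+* T) (A : PowerSeries R) :
    PowerSeries.map g (PowerSeries.map f A) = PowerSeries.map (g.comp f) A := by
  ext m
  simp [PowerSeries.coeff_map]

end MumfordAux


/-- Let `K ⊆ L` be fields of characteristic zero with `L/K` finite Galois,
`g ≥ 1`, `f ∈ K[z]`, `G ∈ K⟦t⟧^g`. Let `U₀(z) = ∏ (z − x_i⁽⁰⁾) ∈ K[z]` be separable with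
roots `x_i⁽⁰⁾ ∈ L`, and `V₀ ∈ K[z]` with `y_i⁽⁰⁾ := V₀(x_i⁽⁰⁾)` nonzero and
`(y_i⁽⁰⁾)² = f(x_i⁽⁰⁾)`. Let `X(t) ∈ L⟦t⟧^g` be the (unique) solution of
`H(X(t))·X'(t) = G(t)` with `x_i(0) = x_i⁽⁰⁾`, `y_i(0) = y_i⁽⁰⁾`. Then
`U(t, z) = ∏ (z − x_i(t))` has all its coefficients in `K⟦t⟧`: each power series coefficient
of each `z`-coefficient of `U` lies in the image of `K` in `L`. -/
theorem mumford_polynomial_has_coefficients_in_base_field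
    (K L : Type*) [Field K] [Field L] [Algebra K L] [CharZero K]
    [FiniteDimensional K L] [IsGalois K L]
    (g : ℕ) (hg : 1 ≤ g)
    (f : Polynomial K) (G : Fin g → PowerSeries K)
    (x₀ : Fin g → L) (hx₀ : Function.Injective x₀)
    (U₀ : Polynomial K)
    (hU₀ : U₀.map (algebraMap K L) = ∏ i : Fin g, (Polynomial.X - Polynomial.C (x₀ i)))
    (V₀ : Polynomial K)
    (y₀ : Fin g → L) (hy₀def : ∀ i, y₀ i = (V₀.map (algebraMap K L)).eval (x₀ i))
    (hy₀ : ∀ i, y₀ i ≠ 0)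
    (hsq : ∀ i, y₀ i ^ 2 = (f.map (algebraMap K L)).eval (x₀ i))
    (X Y : Fin g → PowerSeries L)
    (hX0 : ∀ i, PowerSeries.constantCoeff (X i) = x₀ i)
    (hY0 : ∀ i, PowerSeries.constantCoeff (Y i) = y₀ i)
    (hYsq : ∀ i, Y i ^ 2 = Polynomial.aeval (X i) (f.map (algebraMap K L)))
    (hsol : ∀ i : Fin g,
      ∑ j : Fin g, X j ^ (i : ℕ) * (Y j)⁻¹ * PowerSeries.derivativeFun (X j) =
        PowerSeries.map (algebraMap K L) (G i)) :
    ∀ k n : ℕ,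
      PowerSeries.coeff n
          ((∏ i : Fin g, (Polynomial.X - Polynomial.C (X i))).coeff k) ∈
        (algebraMap K L).range := by

  intro k n
  have hLchar : CharZero L := charZero_of_injective_algebraMap (algebraMap K L).injective
  set fL := f.map (algebraMap K L) with hfL
  set c := PowerSeries.coeff n
      ((∏ i : Fin g, (Polynomial.X - Polynomial.C (X i))).coeff k) with hc
  suffices hfix : ∀ σ : L ≃ₐ[K] L, σ c = c by
    have hmem : c ∈ IntermediateField.fixedField (⊤ : Subgroup (L ≃ₐ[K] L)) :=
      fun σ => hfix σ.1
    rw [← IntermediateField.fixingSubgroup_bot (F := K) (E := L),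
      IsGalois.fixedField_fixingSubgroup] at hmem
    rw [IntermediateField.mem_bot] at hmem
    obtain ⟨a, ha⟩ := hmem
    exact ⟨a, ha⟩
  intro σ
  set ρ : L →+* L := (σ : L →+* L) with hρ
  have hcomp : ρ.comp (algebraMap K L) = algebraMap K L := RingHom.ext fun a => σ.commutes a
  have hevalK : ∀ (p : Polynomial K) (x : L),
      σ ((p.map (algebraMap K L)).eval x) = (p.map (algebraMap K L)).eval (σ x) := by
    intro p x
    rw [Polynomial.eval_map, Polynomial.eval_map]
    calc σ (Polynomial.eval₂ (algebraMap K L) x p)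
        = Polynomial.eval₂ (ρ.comp (algebraMap K L)) (σ x) p :=
          Polynomial.hom_eval₂ p (algebraMap K L) ρ x
      _ = Polynomial.eval₂ (algebraMap K L) (σ x) p := by rw [hcomp]
  -- the permutation of the roots
  have hroot : ∀ i, ∃ j, σ (x₀ i) = x₀ j := by
    intro i
    have h0 : (U₀.map (algebraMap K L)).eval (x₀ i) = 0 := by
      rw [hU₀, Polynomial.eval_prod]
      exact Finset.prod_eq_zero (Finset.mem_univ i) (by simp)
    have h1 : (U₀.map (algebraMap K L)).eval (σ (x₀ i)) = 0 := by
      rw [← hevalK U₀ (x₀ i), h0, map_zero]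
    rw [hU₀, Polynomial.eval_prod] at h1
    obtain ⟨j, _, hj⟩ := Finset.prod_eq_zero_iff.mp h1
    exact ⟨j, by simpa [sub_eq_zero] using hj⟩
  choose πf hπf using hroot
  have hπinj : Function.Injective πf := by
    intro a b hab
    have h1 : σ (x₀ a) = σ (x₀ b) := by rw [hπf a, hπf b, hab]
    exact hx₀ (σ.injective h1)
  let π : Fin g ≃ Fin g := Equiv.ofBijective πf (Finite.injective_iff_bijective.mp hπinj)
  have hπ : ∀ i, σ (x₀ i) = x₀ (π i) := hπf
  have hσy : ∀ i, σ (y₀ i) = y₀ (π i) := by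
    intro i
    rw [hy₀def i, hevalK V₀ (x₀ i), hπ i, ← hy₀def (π i)]
  -- transported solution
  have hYne : ∀ j, PowerSeries.constantCoeff (Y j) ≠ 0 := by
    intro j; rw [hY0 j]; exact hy₀ j
  have hmapinv : ∀ j, PowerSeries.map ρ ((Y j)⁻¹) = (PowerSeries.map ρ (Y j))⁻¹ := by
    intro j
    have hne : PowerSeries.constantCoeff (PowerSeries.map ρ (Y j)) ≠ 0 := by
      rw [MumfordAux.constantCoeff_map', hY0 j]
      intro h
      exact hy₀ j (σ.injective (by rw [show ρ (y₀ j) = σ (y₀ j) from rfl] at h; rw [h, map_zero]))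
    have h1 : (Y j)⁻¹ * Y j = 1 := by
      rw [mul_comm]; exact PowerSeries.mul_inv_cancel _ (hYne j)
    rw [PowerSeries.eq_inv_iff_mul_eq_one hne, ← map_mul, h1, map_one]
  have hmapaeval : ∀ A : PowerSeries L,
      PowerSeries.map ρ (Polynomial.aeval A fL) = Polynomial.aeval (PowerSeries.map ρ A) fL := by
    intro A
    rw [Polynomial.aeval_def, Polynomial.aeval_def]
    have h1 : (PowerSeries.map ρ).comp (algebraMap L (PowerSeries L)) =
        (algebraMap L (PowerSeries L)).comp ρ := by
      refine RingHom.ext fun a => ?_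
      show PowerSeries.map ρ (PowerSeries.C a) = PowerSeries.C (ρ a)
      exact PowerSeries.map_C ρ a
    have h2 : fL.map ρ = fL := by
      rw [hfL, Polynomial.map_map, hcomp]
    calc PowerSeries.map ρ (Polynomial.eval₂ (algebraMap L (PowerSeries L)) A fL)
        = Polynomial.eval₂ ((PowerSeries.map ρ).comp (algebraMap L (PowerSeries L)))
            (PowerSeries.map ρ A) fL := Polynomial.hom_eval₂ fL _ _ A
      _ = Polynomial.eval₂ ((algebraMap L (PowerSeries L)).comp ρ)
            (PowerSeries.map ρ A) fL := by rw [h1]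
      _ = _ := by rw [← Polynomial.eval₂_map, h2]
  have hsol₂ : ∀ i : Fin g,
      ∑ j : Fin g, (PowerSeries.map ρ (X j)) ^ (i : ℕ) * (PowerSeries.map ρ (Y j))⁻¹ *
          PowerSeries.derivativeFun (PowerSeries.map ρ (X j)) =
        PowerSeries.map (algebraMap K L) (G i) := by
    intro i
    have h1 := congrArg (PowerSeries.map ρ) (hsol i)
    rw [map_sum] at h1
    simp only [map_mul, map_pow, hmapinv, MumfordAux.map_derivativeFun] at h1
    rw [h1, MumfordAux.map_powerSeries_map, hcomp]
  have hsolπ : ∀ i : Fin g,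
      ∑ j : Fin g, (X (π j)) ^ (i : ℕ) * (Y (π j))⁻¹ *
          PowerSeries.derivativeFun (X (π j)) =
        PowerSeries.map (algebraMap K L) (G i) := by
    intro i
    rw [← hsol i]
    exact Equiv.sum_comp π (fun j => X j ^ (i : ℕ) * (Y j)⁻¹ *
      PowerSeries.derivativeFun (X j))
  have huniq := MumfordAux.solution_unique (x₀ ∘ π) (y₀ ∘ π)
    (hx₀.comp π.injective) (fun i => hy₀ (π i)) fL
    (fun i => PowerSeries.map ρ (X i)) (fun i => PowerSeries.map ρ (Y i))
    (fun i => X (π i)) (fun i => Y (π i))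
    (fun i => by rw [MumfordAux.constantCoeff_map', hX0 i]; exact hπ i)
    (fun i => hX0 (π i))
    (fun i => by rw [MumfordAux.constantCoeff_map', hY0 i]; exact hσy i)
    (fun i => hY0 (π i))
    (fun i => by rw [← map_pow, hYsq i, hmapaeval])
    (fun i => hYsq (π i))
    (fun i => by rw [hsol₂ i, hsolπ i])
  -- invariance of the product
  have hprod : Polynomial.map (PowerSeries.map ρ)
      (∏ i : Fin g, (Polynomial.X - Polynomial.C (X i))) =
      ∏ i : Fin g, (Polynomial.X - Polynomial.C (X i)) := by
    rw [Polynomial.map_prod]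
    simp only [Polynomial.map_sub, Polynomial.map_X, Polynomial.map_C]
    calc (∏ i : Fin g, (Polynomial.X - Polynomial.C (PowerSeries.map ρ (X i))))
        = ∏ i : Fin g, (Polynomial.X - Polynomial.C (X (π i))) :=
          Finset.prod_congr rfl fun i _ =>
            congrArg (fun z => Polynomial.X - Polynomial.C z) (huniq i)
      _ = ∏ i : Fin g, (Polynomial.X - Polynomial.C (X i)) :=
          Equiv.prod_comp π (fun i => Polynomial.X - Polynomial.C (X i))
  have hcoeffk : PowerSeries.map ρ
      ((∏ i : Fin g, (Polynomial.X - Polynomial.C (X i))).coeff k) =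
      (∏ i : Fin g, (Polynomial.X - Polynomial.C (X i))).coeff k := by
    rw [← Polynomial.coeff_map, hprod]
  have h3 := congrArg (PowerSeries.coeff n) hcoeffk
  rw [PowerSeries.coeff_map] at h3
  exact h3
end
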